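/- For every integer n ≥ 1, the independence domination number of the ortho-chain hexagonal cactus O_n equals ⌈3n/2⌉. -/
import Mathlib


/-- `S` is an independent dominating set of `G`: pairwise non-adjacent, and every
vertex outside `S` has a neighbour in `S`. -/
def IsIndepDomSet {V : Type*} (G : SimpleGraph V) (S : Finset V) : Prop :=
  (∀ v ∈ S, ∀ w ∈ S, ¬ G.Adj v w) ∧ ∀ v, v ∉ S → ∃ w ∈ S, G.Adj v w

/-- The ortho-chain hexagonal cactus `O n`: `Sum.inl i` is the cut vertex `x i`
(`0 ≤ i ≤ n`) and `Sum.inr (k, t)` for `t = 0, 1, 2, 3` is `a (k+1)`, `b (k+1)`,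
`c (k+1)`, `d (k+1)` respectively (`0 ≤ k ≤ n-1`); the `i`-th hexagon
(`1 ≤ i ≤ n`) is the six-cycle `x (i-1) – x i – a i – b i – c i – d i – x (i-1)`. -/
def orthoHex (n : ℕ) : SimpleGraph (Fin (n + 1) ⊕ Fin n × Fin 4) :=
  SimpleGraph.fromRel fun p q =>
    match p, q with
    | Sum.inl i, Sum.inl j => (i : ℕ) + 1 = (j : ℕ)
    | Sum.inl i, Sum.inr (k, t) =>
        ((i : ℕ) = (k : ℕ) + 1 ∧ t = 0) ∨ ((i : ℕ) = (k : ℕ) ∧ t = 3)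
    | Sum.inr (k, t), Sum.inr (k', t') =>
        k = k' ∧ ((t = 0 ∧ t' = 1) ∨ (t = 1 ∧ t' = 2) ∨ (t = 2 ∧ t' = 3))
    | _, _ => False

/-- The number of independent dominating sets of the ortho-chain hexagonal cactus `O n`. -/
noncomputable def numIDSOrthoHex (n : ℕ) : ℕ :=
  Nat.card {S : Finset (Fin (n + 1) ⊕ Fin n × Fin 4) // IsIndepDomSet (orthoHex n) S}

/-- The independence domination number of a graph: the minimum cardinality of an
independent dominating set. -/
noncomputable def indepDomNum {V : Type*} (G : SimpleGraph V) : ℕ :=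
  sInf {k | ∃ S : Finset V, IsIndepDomSet G S ∧ S.card = k}


open Finset

def idsSet (n : ℕ) : Finset (Fin (n + 1) ⊕ Fin n × Fin 4) :=
  ((univ.filter fun i : Fin (n+1) => i.val % 2 = 1).map ⟨Sum.inl, Sum.inl_injective⟩) ∪
  (univ.map ⟨fun k : Fin n => Sum.inr (k, if k.val % 2 = 0 then 2 else 1),
    fun a b h => by exact ((Prod.mk.injEq _ _ _ _ ▸ Sum.inr.inj h : _ ∧ _)).1⟩)
lemma mem_idsSet_inl (n : ℕ) (i : Fin (n+1)) :
    Sum.inl i ∈ idsSet n ↔ i.val % 2 = 1 := by simp [idsSet]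
lemma mem_idsSet_inr (n : ℕ) (k : Fin n) (t : Fin 4) :
    Sum.inr (k, t) ∈ idsSet n ↔ t = if k.val % 2 = 0 then 2 else 1 := by
  simp [idsSet, eq_comm]

lemma idsSet_indep (n : ℕ) : ∀ v ∈ idsSet n, ∀ w ∈ idsSet n, ¬ (orthoHex n).Adj v w := by
  intro v hv w hw hadj
  rw [orthoHex, SimpleGraph.fromRel_adj] at hadj
  obtain ⟨hne, h⟩ := hadj
  rcases v with i | ⟨k, t⟩ <;> rcases w with j | ⟨k', t'⟩
  · rw [mem_idsSet_inl] at hv hw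
    rcases h with h | h <;> omega
  · rw [mem_idsSet_inl] at hv; rw [mem_idsSet_inr] at hw
    subst hw
    rcases h with h | h
    · rcases h with ⟨hi, ht⟩ | ⟨hi, ht⟩ <;> split at ht <;> simp_all <;> omega
    · simp at h
  · rw [mem_idsSet_inl] at hw; rw [mem_idsSet_inr] at hv
    subst hv
    rcases h with h | h
    · simp at h
    · rcases h with ⟨hi, ht⟩ | ⟨hi, ht⟩ <;> split at ht <;> simp_all <;> omega
  · rw [mem_idsSet_inr] at hv hw
    subst hv; subst hw
    rcases h with ⟨hk, h⟩ | ⟨hk, h⟩ <;> subst hk <;>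
      rcases h with ⟨h1, h2⟩ | ⟨h1, h2⟩ | ⟨h1, h2⟩ <;> split at h1 <;> split at h2 <;>
        simp_all

lemma idsSet_dom (n : ℕ) (hn : 1 ≤ n) :
    ∀ v, v ∉ idsSet n → ∃ w ∈ idsSet n, (orthoHex n).Adj v w := by
  have adj : ∀ v w, v ≠ w → _ → (orthoHex n).Adj v w := fun v w h1 h2 =>
    (SimpleGraph.fromRel_adj _ v w).2 ⟨h1, Or.inl h2⟩
  intro v hv
  rcases v with i | ⟨k, t⟩
  · rw [mem_idsSet_inl] at hv
    by_cases hi : i.val < n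
    · refine ⟨Sum.inl ⟨i.val + 1, by omega⟩, ?_, ?_⟩
      · rw [mem_idsSet_inl]; simp; omega
      · exact adj _ _ (by simp [Fin.ext_iff]) (by simp)
    · -- i = n, n even (since i.val % 2 = 0)
      refine ⟨Sum.inl ⟨i.val - 1, by omega⟩, ?_, ?_⟩
      · rw [mem_idsSet_inl]; simp; omega
      · have : i.val - 1 + 1 = i.val := by omega
        exact ((orthoHex n).adj_symm (adj _ _ (by simp only [ne_eq, Sum.inl.injEq, Fin.ext_iff]; omega) (by simp [this])))
  · rw [mem_idsSet_inr] at hv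
    by_cases hk : k.val % 2 = 0
    · -- member is (k,2); t ≠ 2
      fin_cases t
      · -- a: neighbor x_{k+1} = inl (k+1), k even so k+1 odd
        refine ⟨Sum.inl ⟨k.val + 1, by omega⟩, ?_, ?_⟩
        · rw [mem_idsSet_inl]; simp; omega
        · exact (orthoHex n).adj_symm (adj _ _ (by simp) (by simp))
      · exact ⟨Sum.inr (k, 2), by rw [mem_idsSet_inr]; simp [hk], adj _ _ (by simp) (by simp)⟩
      · simp [hk] at hv
      · exact ⟨Sum.inr (k, 2), by rw [mem_idsSet_inr]; simp [hk],
          (orthoHex n).adj_symm (adj _ _ (by simp) (by simp))⟩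
    · -- member is (k,1); k odd
      fin_cases t
      · exact ⟨Sum.inr (k, 1), by rw [mem_idsSet_inr]; simp [hk], adj _ _ (by simp) (by simp)⟩
      · simp [hk] at hv
      · exact ⟨Sum.inr (k, 1), by rw [mem_idsSet_inr]; simp [hk],
          (orthoHex n).adj_symm (adj _ _ (by simp) (by simp))⟩
      · -- d: neighbor x_k = inl k, k odd
        refine ⟨Sum.inl ⟨k.val, by omega⟩, ?_, ?_⟩
        · rw [mem_idsSet_inl]; simp; omega
        · exact (orthoHex n).adj_symm (adj _ _ (by simp) (by simp))

lemma card_odd_fin (m : ℕ) : (univ.filter fun i : Fin m => i.val % 2 = 1).card = m / 2 := by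
  rw [Finset.card_filter, Fin.sum_univ_eq_sum_range (fun i => if i % 2 = 1 then 1 else 0)]
  induction m with
  | zero => simp
  | succ m ih => rw [Finset.sum_range_succ, ih]; split <;> omega

lemma card_idsSet (n : ℕ) : (idsSet n).card = (3 * n + 1) / 2 := by
  rw [idsSet, Finset.card_union_of_disjoint, Finset.card_map, Finset.card_map,
    card_odd_fin, Finset.card_univ]
  · simp; omega
  · simp [Finset.disjoint_left]

lemma adj_a (n : ℕ) (k : Fin n) (w) (h : (orthoHex n).Adj (Sum.inr (k,0)) w) :
    w = Sum.inl k.succ ∨ w = Sum.inr (k,1) := by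
  rw [orthoHex, SimpleGraph.fromRel_adj] at h
  obtain ⟨hne, h⟩ := h
  rcases w with i | ⟨k', t'⟩
  · left
    rcases h with h | h
    · simp at h
    · rcases h with ⟨hi, ht⟩ | ⟨hi, ht⟩
      · simp only [Sum.inl.injEq, Fin.ext_iff, Fin.val_succ]; omega
      · exact absurd ht (by decide)
  · fin_cases t' <;> simp_all

lemma adj_b (n : ℕ) (k : Fin n) (w) (h : (orthoHex n).Adj (Sum.inr (k,1)) w) :
    w = Sum.inr (k,0) ∨ w = Sum.inr (k,2) := by
  rw [orthoHex, SimpleGraph.fromRel_adj] at h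
  obtain ⟨hne, h⟩ := h
  rcases w with i | ⟨k', t'⟩
  · simp at h
  · fin_cases t' <;> simp_all

lemma adj_c (n : ℕ) (k : Fin n) (w) (h : (orthoHex n).Adj (Sum.inr (k,2)) w) :
    w = Sum.inr (k,1) ∨ w = Sum.inr (k,3) := by
  rw [orthoHex, SimpleGraph.fromRel_adj] at h
  obtain ⟨hne, h⟩ := h
  rcases w with i | ⟨k', t'⟩
  · simp at h
  · fin_cases t' <;> simp_all

lemma adj_d (n : ℕ) (k : Fin n) (w) (h : (orthoHex n).Adj (Sum.inr (k,3)) w) :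
    w = Sum.inl k.castSucc ∨ w = Sum.inr (k,2) := by
  rw [orthoHex, SimpleGraph.fromRel_adj] at h
  obtain ⟨hne, h⟩ := h
  rcases w with i | ⟨k', t'⟩
  · left
    rcases h with h | h
    · simp at h
    · rcases h with ⟨hi, ht⟩ | ⟨hi, ht⟩
      · exact absurd ht (by decide)
      · simp only [Sum.inl.injEq, Fin.ext_iff, Fin.coe_castSucc]; omega
  · fin_cases t' <;> simp_all

section
variable {n : ℕ} {S : Finset (Fin (n + 1) ⊕ Fin n × Fin 4)}

lemma contra_b (hDom : ∀ v ∉ S, ∃ w ∈ S, (orthoHex n).Adj v w) (k : Fin n)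
    (h0 : Sum.inr (k, 0) ∉ S) (h1 : Sum.inr (k, 1) ∉ S) (h2 : Sum.inr (k, 2) ∉ S) : False := by
  obtain ⟨w, hw, hadj⟩ := hDom _ h1
  rcases adj_b n k w hadj with rfl | rfl <;> contradiction

lemma contra_c (hDom : ∀ v ∉ S, ∃ w ∈ S, (orthoHex n).Adj v w) (k : Fin n)
    (h1 : Sum.inr (k, 1) ∉ S) (h2 : Sum.inr (k, 2) ∉ S) (h3 : Sum.inr (k, 3) ∉ S) : False := by
  obtain ⟨w, hw, hadj⟩ := hDom _ h2
  rcases adj_c n k w hadj with rfl | rfl <;> contradiction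

lemma contra_a (hDom : ∀ v ∉ S, ∃ w ∈ S, (orthoHex n).Adj v w) (k : Fin n)
    (hs : Sum.inl k.succ ∉ S) (h0 : Sum.inr (k, 0) ∉ S) (h1 : Sum.inr (k, 1) ∉ S) : False := by
  obtain ⟨w, hw, hadj⟩ := hDom _ h0
  rcases adj_a n k w hadj with rfl | rfl <;> contradiction

lemma contra_d (hDom : ∀ v ∉ S, ∃ w ∈ S, (orthoHex n).Adj v w) (k : Fin n)
    (hc : Sum.inl k.castSucc ∉ S) (h2 : Sum.inr (k, 2) ∉ S) (h3 : Sum.inr (k, 3) ∉ S) : False := by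
  obtain ⟨w, hw, hadj⟩ := hDom _ h3
  rcases adj_d n k w hadj with rfl | rfl <;> contradiction

end

lemma hex_bound (n : ℕ) (S : Finset (Fin (n + 1) ⊕ Fin n × Fin 4))
    (hS : IsIndepDomSet (orthoHex n) S) (k : Fin n) :
    3 ≤ 2 * ((if Sum.inr (k,0) ∈ S then 1 else 0) + (if Sum.inr (k,1) ∈ S then 1 else 0)
        + (if Sum.inr (k,2) ∈ S then 1 else 0) + (if Sum.inr (k,3) ∈ S then 1 else 0))
      + (if Sum.inl k.castSucc ∈ S then 1 else 0) + (if Sum.inl k.succ ∈ S then 1 else 0) := by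
  obtain ⟨hInd, hDom⟩ := hS
  by_cases h0 : Sum.inr (k,0) ∈ S <;> by_cases h1 : Sum.inr (k,1) ∈ S <;>
    by_cases h2 : Sum.inr (k,2) ∈ S <;> by_cases h3 : Sum.inr (k,3) ∈ S <;>
    simp only [h0, h1, h2, h3, if_true, if_false] <;>
    by_cases hc : Sum.inl k.castSucc ∈ S <;> by_cases hs : Sum.inl k.succ ∈ S <;>
    simp only [hc, hs, if_true, if_false] <;> try omega
  all_goals exfalso
  all_goals first
    | exact contra_b hDom k h0 h1 h2
    | exact contra_c hDom k h1 h2 h3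
    | exact contra_a hDom k hs h0 h1
    | exact contra_d hDom k hc h2 h3

lemma lower_bound (n : ℕ) (S : Finset (Fin (n + 1) ⊕ Fin n × Fin 4))
    (hS : IsIndepDomSet (orthoHex n) S) : 3 * n ≤ 2 * S.card := by
  classical
  set y : Fin (n+1) → ℕ := fun j => if Sum.inl j ∈ S then 1 else 0 with hy
  set g : Fin n → ℕ := fun k =>
    (if Sum.inr (k,0) ∈ S then 1 else 0) + (if Sum.inr (k,1) ∈ S then 1 else 0)
      + (if Sum.inr (k,2) ∈ S then 1 else 0) + (if Sum.inr (k,3) ∈ S then 1 else 0) with hg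
  have hcard : S.card = ∑ j, y j + ∑ k, g k := by
    have h1 : S.card = ∑ v, (if v ∈ S then 1 else 0) := by
      rw [← Finset.card_filter, Finset.filter_univ_mem]
    rw [h1, Fintype.sum_sum_type, Fintype.sum_prod_type]
    congr 1
    apply Finset.sum_congr rfl
    intro k _
    rw [Fin.sum_univ_four, hg]
  have hsum3 : 3 * n ≤ ∑ k : Fin n, (2 * g k + y k.castSucc + y k.succ) := by
    calc 3 * n = ∑ _k : Fin n, 3 := by simp [Finset.sum_const, mul_comm]
    _ ≤ _ := Finset.sum_le_sum fun k _ => hex_bound n S hS k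
  have hsplit : ∑ k : Fin n, (2 * g k + y k.castSucc + y k.succ)
      = 2 * ∑ k : Fin n, g k + ∑ k : Fin n, y k.castSucc + ∑ k : Fin n, y k.succ := by
    rw [Finset.sum_add_distrib, Finset.sum_add_distrib, Finset.mul_sum]
  have hc : ∑ k : Fin n, y k.castSucc ≤ ∑ j, y j := by
    rw [Fin.sum_univ_castSucc (f := y)]; omega
  have hs : ∑ k : Fin n, y k.succ ≤ ∑ j, y j := by
    rw [Fin.sum_univ_succ (f := y)]; omega
  omega


/-- For every `n ≥ 1`, the independence domination number of the ortho-chain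
hexagonal cactus `O n` equals `⌈3n/2⌉`. -/
theorem indepDomNum_orthoHex (n : ℕ) (hn : 1 ≤ n) :
    indepDomNum (orthoHex n) = (3 * n + 1) / 2 := by
  have hids : IsIndepDomSet (orthoHex n) (idsSet n) := ⟨idsSet_indep n, idsSet_dom n hn⟩
  have hne : {k | ∃ S : Finset (Fin (n + 1) ⊕ Fin n × Fin 4),
      IsIndepDomSet (orthoHex n) S ∧ S.card = k}.Nonempty :=
    ⟨(idsSet n).card, idsSet n, hids, rfl⟩
  rw [indepDomNum]
  apply le_antisymm
  · exact Nat.sInf_le ⟨idsSet n, hids, card_idsSet n⟩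
  · obtain ⟨S, hS, hcardS⟩ := Nat.sInf_mem hne
    have := lower_bound n S hS
    omega
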